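/- Let β, K > 0 and γ, δ ≥ 0, and let t₀ ∈ ℝ. Suppose V : [t₀, ∞) → ℝ is differentiable, V(t) ≥ 0 for all t ≥ t₀, and V satisfies the differential inequality V'(t) ≤ −β·V(t) + γ·exp(−K·t)·V(t) + δ·exp(−K·t)·√(V(t)) for all t ≥ t₀. Then V(t) → 0 as t → ∞. -/

import Mathlib

set_option maxHeartbeats 1000000

open Real Filter MeasureTheory intervalIntegral

lemma gronwall_aux (t₀ : ℝ) (a b A V : ℝ → ℝ)
    (hA : ∀ t, HasDerivAt A (a t) t) (hA0 : A t₀ = 0)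
    (hb : Continuous fun s => b s * Real.exp (-(A s)))
    (hdiff : ∀ t, t₀ ≤ t → DifferentiableAt ℝ V t)
    (hineq : ∀ t, t₀ ≤ t → deriv V t ≤ a t * V t + b t) :
    ∀ t, t₀ ≤ t →
      V t ≤ Real.exp (A t) * (V t₀ + ∫ s in t₀..t, b s * Real.exp (-(A s))) := by
  set F : ℝ → ℝ := fun t => ∫ s in t₀..t, b s * Real.exp (-(A s)) with hF
  set g : ℝ → ℝ := fun t => V t * Real.exp (-(A t)) - F t with hg
  have hFd : ∀ t : ℝ, HasDerivAt F (b t * Real.exp (-(A t))) t := by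
    intro t
    exact integral_hasDerivAt_right (hb.intervalIntegrable _ _)
      hb.aestronglyMeasurable.stronglyMeasurableAtFilter hb.continuousAt
  have hgd : ∀ t, t₀ ≤ t → HasDerivAt g
      ((deriv V t - a t * V t - b t) * Real.exp (-(A t))) t := by
    intro t ht
    have h1 : HasDerivAt (fun t => Real.exp (-(A t)))
        (Real.exp (-(A t)) * -(a t)) t := ((hA t).neg).exp
    have h2 := ((hdiff t ht).hasDerivAt.mul h1).sub (hFd t)
    exact h2.congr_deriv (by ring)
  have hanti : AntitoneOn g (Set.Ici t₀) := by
    apply antitoneOn_of_deriv_nonpos (convex_Ici t₀)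
    · intro t ht
      exact ((hgd t ht).differentiableAt).continuousAt.continuousWithinAt
    · rw [interior_Ici]
      intro t ht
      exact ((hgd t (le_of_lt ht)).differentiableAt).differentiableWithinAt
    · rw [interior_Ici]
      intro t ht
      rw [(hgd t (le_of_lt ht)).deriv]
      have := hineq t (le_of_lt ht)
      have he : (0:ℝ) < Real.exp (-(A t)) := Real.exp_pos _
      nlinarith
  intro t ht
  have := hanti (Set.self_mem_Ici) ht ht
  have hgt₀ : g t₀ = V t₀ := by
    simp [hg, hF, hA0]
  rw [hgt₀] at this
  have he : (0:ℝ) < Real.exp (-(A t)) := Real.exp_pos _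
  have h3 : V t * Real.exp (-(A t)) ≤ V t₀ + F t := by
    have : V t * Real.exp (-(A t)) - F t ≤ V t₀ := this
    linarith
  have h4 := mul_le_mul_of_nonneg_right h3 (Real.exp_pos (A t)).le
  rw [mul_comm (Real.exp (A t))]
  calc V t = V t * Real.exp (-(A t)) * Real.exp (A t) := by
        rw [mul_assoc, ← Real.exp_add]; simp
    _ ≤ (V t₀ + F t) * Real.exp (A t) := h4

/-- Lemma 4 combined with the comparison lemma: any nonnegative differentiable
function satisfying the differential inequality
`V' ≤ -β V + γ e^{-Kt} V + δ e^{-Kt} √V` converges to zero. -/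
theorem scalar_diff_ineq_tendsto_zero
    (β K γ δ t₀ : ℝ) (hβ : 0 < β) (hK : 0 < K) (hγ : 0 ≤ γ) (hδ : 0 ≤ δ)
    (V : ℝ → ℝ)
    (hdiff : ∀ t, t₀ ≤ t → DifferentiableAt ℝ V t)
    (hnn : ∀ t, t₀ ≤ t → 0 ≤ V t)
    (hineq : ∀ t, t₀ ≤ t →
      deriv V t ≤ -β * V t + γ * Real.exp (-K * t) * V t
        + δ * Real.exp (-K * t) * Real.sqrt (V t)) :
    Filter.Tendsto V Filter.atTop (nhds 0) := by
  set c : ℝ := γ + δ/2 with hc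
  have hc0 : 0 ≤ c := by positivity
  set m : ℝ := min β K with hm
  have hm0 : 0 < m := lt_min hβ hK
  set a : ℝ → ℝ := fun t => -β + c * Real.exp (-K*t) with ha
  set b : ℝ → ℝ := fun t => (δ/2) * Real.exp (-K*t) with hb
  set A : ℝ → ℝ := fun t => -β*(t-t₀) + (c/K) * (Real.exp (-K*t₀) - Real.exp (-K*t)) with hA
  set M : ℝ := (c/K) * Real.exp (-K*t₀) with hM
  have hAd : ∀ t, HasDerivAt A (a t) t := by
    intro t
    have hexp : HasDerivAt (fun t : ℝ => Real.exp (-K*t)) (Real.exp (-K*t) * -K) t := by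
      have : HasDerivAt (fun t : ℝ => -K*t) (-K) t := by
        simpa using (hasDerivAt_id t).const_mul (-K)
      exact this.exp
    have h1 : HasDerivAt (fun t : ℝ => -β*(t-t₀)) (-β) t := by
      simpa using ((hasDerivAt_id t).sub_const t₀).const_mul (-β)
    have h2 := ((hasDerivAt_const t (Real.exp (-K*t₀))).sub hexp).const_mul (c/K)
    have := h1.add h2
    exact this.congr_deriv (by simp only [ha]; field_simp; ring)
  have hA0 : A t₀ = 0 := by simp [hA]
  have hAc : Continuous A := by
    apply Continuous.add
    · fun_prop
    · apply Continuous.mul continuous_const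
      apply Continuous.sub continuous_const
      fun_prop
  have hbc : Continuous fun s => b s * Real.exp (-(A s)) := by
    apply Continuous.mul
    · fun_prop
    · exact (hAc.neg).rexp
  have hineq' : ∀ t, t₀ ≤ t → deriv V t ≤ a t * V t + b t := by
    intro t ht
    have h := hineq t ht
    have he : (0:ℝ) < Real.exp (-K*t) := Real.exp_pos _
    have hVnn := hnn t ht
    have hs : Real.sqrt (V t) ≤ (V t + 1)/2 := by
      nlinarith [Real.sq_sqrt hVnn, sq_nonneg (Real.sqrt (V t) - 1)]
    have h2 : δ * Real.exp (-K*t) * Real.sqrt (V t)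
        ≤ δ * Real.exp (-K*t) * ((V t + 1)/2) :=
      mul_le_mul_of_nonneg_left hs (by positivity)
    calc deriv V t ≤ -β * V t + γ * Real.exp (-K * t) * V t
          + δ * Real.exp (-K * t) * Real.sqrt (V t) := h
      _ ≤ -β * V t + γ * Real.exp (-K * t) * V t
          + δ * Real.exp (-K*t) * ((V t + 1)/2) := by linarith
      _ = a t * V t + b t := by simp only [ha, hb, hc]; ring
  have key := gronwall_aux t₀ a b A V hAd hA0 hbc hdiff hineq'
  -- pointwise bound
  set D₁ : ℝ := (δ/2) * Real.exp M * Real.exp (-K*t₀) with hD₁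
  have hbound : ∀ t, t₀ ≤ t → V t ≤ V t₀ * Real.exp M * Real.exp (-β*(t-t₀))
      + D₁ * ((t-t₀) * Real.exp (-m*(t-t₀))) := by
    intro t ht
    have hAle : A t ≤ -β*(t-t₀) + M := by
      have h1 : Real.exp (-K*t₀) - Real.exp (-K*t) ≤ Real.exp (-K*t₀) := by
        have := (Real.exp_pos (-K*t)).le; linarith
      have h2 : (c/K) * (Real.exp (-K*t₀) - Real.exp (-K*t)) ≤ M := by
        rw [hM]; exact mul_le_mul_of_nonneg_left h1 (by positivity)
      simp only [hA]; linarith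
    -- integral bound
    have hFle : (∫ s in t₀..t, b s * Real.exp (-(A s)))
        ≤ D₁ * Real.exp (-m*(t-t₀)) * Real.exp (-(A t)) * (t - t₀) := by
      have hC : ∀ s ∈ Set.uIoc t₀ t, ‖b s * Real.exp (-(A s))‖
          ≤ D₁ * Real.exp (-m*(t-t₀)) * Real.exp (-(A t)) := by
        intro s hs
        rw [Set.uIoc_of_le ht] at hs
        obtain ⟨hs1, hs2⟩ := hs
        have hs1' : t₀ ≤ s := hs1.le
        have hbpos : 0 ≤ b s * Real.exp (-(A s)) := by positivity
        rw [Real.norm_eq_abs, abs_of_nonneg hbpos]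
        -- b s * exp(-(A s)) ≤ D₁ e^{-m(t-t₀)} e^{-(A t)}
        -- equivalent to (δ/2) exp(-Ks + A t - A s) ≤ D₁ e^{-m(t-t₀)}
        have hE : -K*s + (A t - A s) ≤ M - K*t₀ - m*(t-t₀) := by
          have h1 : A t - A s = -β*(t-s) + (c/K)*(Real.exp (-K*s) - Real.exp (-K*t)) := by
            simp only [hA]; ring
          have h2 : Real.exp (-K*s) - Real.exp (-K*t) ≤ Real.exp (-K*t₀) := by
            have e1 : Real.exp (-K*s) ≤ Real.exp (-K*t₀) := by
              apply Real.exp_le_exp.2; nlinarith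
            have := (Real.exp_pos (-K*t)).le; linarith
          have h3 : (c/K)*(Real.exp (-K*s) - Real.exp (-K*t)) ≤ M := by
            rw [hM]; exact mul_le_mul_of_nonneg_left h2 (by positivity)
          have h4 : m*(t-t₀) ≤ K*(s-t₀) + β*(t-s) := by
            have hmK : m ≤ K := min_le_right _ _
            have hmβ : m ≤ β := min_le_left _ _
            nlinarith
          rw [h1]; nlinarith
        have step : b s * Real.exp (-(A s))
            = (δ/2) * Real.exp (-K*s + (A t - A s)) * Real.exp (-(A t)) := by
          have e1 : (δ/2:ℝ) * Real.exp (-K*s + (A t - A s)) * Real.exp (-(A t))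
              = (δ/2) * Real.exp (-K*s + -(A s)) := by
            rw [mul_assoc, ← Real.exp_add]
            congr 2
            ring
          rw [e1, hb, mul_assoc, ← Real.exp_add]
        rw [step]
        have : Real.exp (-K*s + (A t - A s)) ≤ Real.exp (M - K*t₀ - m*(t-t₀)) :=
          Real.exp_le_exp.2 hE
        have hgoal : (δ/2) * Real.exp (-K*s + (A t - A s))
            ≤ D₁ * Real.exp (-m*(t-t₀)) := by
          rw [hD₁]
          calc (δ/2) * Real.exp (-K*s + (A t - A s))
              ≤ (δ/2) * Real.exp (M - K*t₀ - m*(t-t₀)) :=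
                mul_le_mul_of_nonneg_left this (by positivity)
            _ = δ/2 * Real.exp M * Real.exp (-K*t₀) * Real.exp (-m*(t-t₀)) := by
                rw [show M - K*t₀ - m*(t-t₀) = M + (-K*t₀) + (-m*(t-t₀)) by ring,
                  Real.exp_add, Real.exp_add]; ring
        exact mul_le_mul_of_nonneg_right hgoal (Real.exp_pos _).le
      have := intervalIntegral.norm_integral_le_of_norm_le_const hC
      rw [Real.norm_eq_abs, abs_of_nonneg (by linarith : (0:ℝ) ≤ t - t₀)] at this
      calc (∫ s in t₀..t, b s * Real.exp (-(A s)))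
          ≤ |∫ s in t₀..t, b s * Real.exp (-(A s))| := le_abs_self _
        _ ≤ D₁ * Real.exp (-m*(t-t₀)) * Real.exp (-(A t)) * (t - t₀) := this
    have hVle := key t ht
    have hexpA : Real.exp (A t) ≤ Real.exp M * Real.exp (-β*(t-t₀)) := by
      rw [← Real.exp_add]
      exact Real.exp_le_exp.2 (by linarith)
    have hV0 := hnn t₀ le_rfl
    calc V t ≤ Real.exp (A t) * (V t₀ + ∫ s in t₀..t, b s * Real.exp (-(A s))) := hVle
      _ ≤ Real.exp (A t) * (V t₀ + D₁ * Real.exp (-m*(t-t₀)) * Real.exp (-(A t)) * (t - t₀)) := by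
          apply mul_le_mul_of_nonneg_left _ (Real.exp_pos _).le
          linarith
      _ = Real.exp (A t) * V t₀
          + D₁ * Real.exp (-m*(t-t₀)) * (Real.exp (A t) * Real.exp (-(A t))) * (t - t₀) := by
          ring
      _ = Real.exp (A t) * V t₀ + D₁ * ((t-t₀) * Real.exp (-m*(t-t₀))) := by
          rw [← Real.exp_add]; simp; ring
      _ ≤ V t₀ * Real.exp M * Real.exp (-β*(t-t₀)) + D₁ * ((t-t₀) * Real.exp (-m*(t-t₀))) := by
          have := mul_le_mul_of_nonneg_right hexpA hV0
          nlinarith [Real.exp_pos (A t)]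
  -- limit of the bound
  have hT1 : Tendsto (fun t : ℝ => Real.exp (-β*(t-t₀))) atTop (nhds 0) := by
    apply Real.tendsto_exp_atBot.comp
    have h1 : Tendsto (fun t : ℝ => β*(t-t₀)) atTop atTop :=
      (tendsto_atTop_add_const_right atTop (-t₀) tendsto_id).const_mul_atTop hβ
    have h2 := tendsto_neg_atBot_iff.2 h1
    simpa [neg_mul] using h2
  have hT2 : Tendsto (fun t : ℝ => (t-t₀) * Real.exp (-m*(t-t₀))) atTop (nhds 0) := by
    have hx : Tendsto (fun t : ℝ => m*(t-t₀)) atTop atTop :=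
      (tendsto_atTop_add_const_right atTop (-t₀) tendsto_id).const_mul_atTop hm0
    have h := (Real.tendsto_pow_mul_exp_neg_atTop_nhds_zero 1).comp hx
    have h2 := h.const_mul (1/m)
    rw [mul_zero] at h2
    convert h2 using 2 with t
    simp only [Function.comp_apply, pow_one]
    rw [neg_mul]
    field_simp
  have hB : Tendsto (fun t : ℝ => V t₀ * Real.exp M * Real.exp (-β*(t-t₀))
      + D₁ * ((t-t₀) * Real.exp (-m*(t-t₀)))) atTop (nhds 0) := by
    have := (hT1.const_mul (V t₀ * Real.exp M)).add (hT2.const_mul D₁)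
    simpa using this
  apply squeeze_zero' (Filter.eventually_atTop.2 ⟨t₀, fun t ht => hnn t ht⟩)
    (Filter.eventually_atTop.2 ⟨t₀, fun t ht => hbound t ht⟩) hB
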